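/- For any positive time steps τ_1, …, τ_N, the DOC kernels have the explicit formula θ^{(n)}_{n−k} = (1/b^{(k)}_0) · ∏_{i=k+1}^n r_i²/(1+2r_i) = (τ_n/(b^{(k)}_0 τ_k)) · ∏_{i=k+1}^n r_i/(1+2r_i) for all 1 ≤ k ≤ n ≤ N (empty products being 1). In particular θ^{(n)}_{n−k} > 0. -/

import Mathlib

open Finset

/-- BDF2 convolution kernels `b^{(n)}_j` built from the step sizes `τ`. -/
noncomputable def bdf2 (τ : ℕ → ℝ) (n j : ℕ) : ℝ :=
  if n = 1 then (if j = 0 then 1 / τ 1 else 0)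
  else if j = 0 then (1 + 2 * (τ n / τ (n - 1))) / (τ n * (1 + τ n / τ (n - 1)))
  else if j = 1 then -(τ n / τ (n - 1)) ^ 2 / (τ n * (1 + τ n / τ (n - 1)))
  else 0

/-- DOC kernels: `doc τ n g = θ^{(n)}_g`, defined by the recursive procedure
`θ^{(n)}_0 = 1/b^{(n)}_0`, `θ^{(n)}_{n-k} = -(1/b^{(k)}_0) ∑_{j=k+1}^n θ^{(n)}_{n-j} b^{(j)}_{j-k}`. -/
noncomputable def doc (τ : ℕ → ℝ) (n : ℕ) : ℕ → ℝ
  | 0 => 1 / bdf2 τ n 0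
  | (g + 1) =>
    -(1 / bdf2 τ (n - (g + 1)) 0) *
      ∑ i ∈ (Finset.range (g + 1)).attach,
        doc τ n i.1 * bdf2 τ (n - i.1) (g + 1 - i.1)
  decreasing_by exact Finset.mem_range.mp i.2

/-- The variable-step BDF2 formula `D_2 v^n = ∑_{k=1}^n b^{(n)}_{n-k} (v^k - v^{k-1})`. -/
noncomputable def D2 {V : Type*} [AddCommGroup V] [Module ℝ V]
    (τ : ℕ → ℝ) (v : ℕ → V) (n : ℕ) : V :=
  ∑ k ∈ Finset.Icc 1 n, bdf2 τ n (n - k) • (v k - v (k - 1))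

/-- Time levels `t_n = τ_1 + ⋯ + τ_n`. -/
noncomputable def tlv (τ : ℕ → ℝ) (n : ℕ) : ℝ := ∑ i ∈ Finset.Icc 1 n, τ i

lemma bdf2_pos (N : ℕ) (τ : ℕ → ℝ) (hτ : ∀ k, 1 ≤ k → k ≤ N → 0 < τ k) (k : ℕ)
    (hk : 1 ≤ k) (hkN : k ≤ N) : 0 < bdf2 τ k 0 := by
  unfold bdf2
  rcases eq_or_lt_of_le hk with h | h
  · simp only [← h, if_pos rfl]
    exact one_div_pos.mpr (hτ 1 le_rfl (h ▸ hkN))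
  · have h2 : k ≠ 1 := by omega
    have hτk : 0 < τ k := hτ k hk hkN
    have hτk1 : 0 < τ (k - 1) := hτ (k - 1) (by omega) (by omega)
    have hr : 0 < τ k / τ (k - 1) := div_pos hτk hτk1
    simp only [h2, if_false, if_pos rfl]
    apply div_pos (by linarith) (mul_pos hτk (by linarith))

lemma doc_formula (N : ℕ) (τ : ℕ → ℝ) (hτ : ∀ k, 1 ≤ k → k ≤ N → 0 < τ k) :
    ∀ g k n, k + g = n → 1 ≤ k → n ≤ N →
      doc τ n g = (1 / bdf2 τ k 0) *
        ∏ i ∈ Finset.Icc (k + 1) n, (τ i / τ (i - 1)) ^ 2 / (1 + 2 * (τ i / τ (i - 1))) := by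
  intro g
  induction g with
  | zero =>
    intro k n hkn hk hn
    have : n = k := by omega
    subst this
    rw [doc]
    simp
  | succ g ih =>
    intro k n hkn hk hn
    have hkn' : k + 1 + g = n := by omega
    rw [doc, Finset.sum_attach (Finset.range (g + 1))
        (fun i => doc τ n i * bdf2 τ (n - i) (g + 1 - i)),
      Finset.sum_eq_single g
        (by
          intro i hi hne
          have hi' : i < g + 1 := Finset.mem_range.mp hi
          have h1 : n - i ≠ 1 := by omega
          have h2 : g + 1 - i ≠ 0 := by omega
          have h3 : g + 1 - i ≠ 1 := by omega
          unfold bdf2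
          simp [h1, h2, h3])
        (by intro h; exact absurd (Finset.mem_range.mpr (by omega)) h)]
    have hng : n - g = k + 1 := by omega
    have hng1 : n - (g + 1) = k := by omega
    rw [hng, hng1, ih (k + 1) n hkn' (by omega) hn]
    have hsplit : (∏ i ∈ Finset.Icc (k + 1) n,
        (τ i / τ (i - 1)) ^ 2 / (1 + 2 * (τ i / τ (i - 1)))) =
        ((τ (k+1) / τ k) ^ 2 / (1 + 2 * (τ (k+1) / τ k))) *
        ∏ i ∈ Finset.Icc (k + 2) n,
        (τ i / τ (i - 1)) ^ 2 / (1 + 2 * (τ i / τ (i - 1))) := by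
      rw [← Finset.Ico_add_one_right_eq_Icc, Finset.prod_eq_prod_Ico_succ_bot (by omega), Finset.Ico_add_one_right_eq_Icc]
      simp
    rw [hsplit]
    have h1 : (k : ℕ) + 1 ≠ 1 := by omega
    have hτk : 0 < τ k := hτ k hk (by omega)
    have hτk1 : 0 < τ (k + 1) := hτ (k + 1) (by omega) (by omega)
    have hr : 0 < τ (k + 1) / τ k := div_pos hτk1 hτk
    have hb0 : bdf2 τ (k + 1) 0 =
        (1 + 2 * (τ (k + 1) / τ k)) / (τ (k + 1) * (1 + τ (k + 1) / τ k)) := by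
      unfold bdf2; simp [h1, show k ≠ 0 by omega]
    have hb1 : bdf2 τ (k + 1) 1 =
        -(τ (k + 1) / τ k) ^ 2 / (τ (k + 1) * (1 + τ (k + 1) / τ k)) := by
      unfold bdf2; simp [h1, show k ≠ 0 by omega]
    rw [show g + 1 - g = 1 from by omega, show k + 1 + 1 = k + 2 from rfl, hb0, hb1]
    have e1 : τ (k + 1) * (1 + τ (k + 1) / τ k) ≠ 0 := ne_of_gt (mul_pos hτk1 (by linarith))
    have e2 : (1 : ℝ) + 2 * (τ (k + 1) / τ k) ≠ 0 := ne_of_gt (by linarith)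
    have hb : bdf2 τ k 0 ≠ 0 := ne_of_gt (bdf2_pos N τ hτ k hk (by omega))
    set R := τ (k + 1) / τ k with hR
    set C := τ (k + 1) * (1 + R) with hC
    set A := (1 : ℝ) + 2 * R with hA
    set B := bdf2 τ k 0 with hB
    set P := ∏ i ∈ Finset.Icc (k + 2) n,
      (τ i / τ (i - 1)) ^ 2 / (1 + 2 * (τ i / τ (i - 1))) with hP
    rw [one_div_div]
    field_simp

lemma prod_ratio (N : ℕ) (τ : ℕ → ℝ) (hτ : ∀ k, 1 ≤ k → k ≤ N → 0 < τ k) (k : ℕ)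
    (hk : 1 ≤ k) :
    ∀ n, k ≤ n → n ≤ N → ∏ i ∈ Finset.Icc (k + 1) n, τ i / τ (i - 1) = τ n / τ k := by
  intro n
  induction n with
  | zero => intro h1 h2; omega
  | succ n ih =>
    intro h1 h2
    rcases eq_or_lt_of_le h1 with h | h
    · rw [← h, Finset.Icc_eq_empty (by omega), Finset.prod_empty,
        div_self (ne_of_gt (hτ k hk (by omega)))]
    · have hkn : k ≤ n := by omega
      rw [Finset.prod_Icc_succ_top (by omega), ih hkn (by omega)]
      have hτn : τ n ≠ 0 := ne_of_gt (hτ n (by omega) (by omega))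
      have hτk : τ k ≠ 0 := ne_of_gt (hτ k hk (by omega))
      simp only [Nat.add_sub_cancel]
      field_simp

/-- explicit formula for the DOC kernels and their positivity. -/
theorem doc_explicit_formula
    (N : ℕ) (τ : ℕ → ℝ) (hτ : ∀ k, 1 ≤ k → k ≤ N → 0 < τ k) :
    ∀ n k, 1 ≤ k → k ≤ n → n ≤ N →
      doc τ n (n - k) =
          (1 / bdf2 τ k 0) *
            ∏ i ∈ Finset.Icc (k + 1) n,
              (τ i / τ (i - 1)) ^ 2 / (1 + 2 * (τ i / τ (i - 1))) ∧
        doc τ n (n - k) =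
          (τ n / (bdf2 τ k 0 * τ k)) *
            ∏ i ∈ Finset.Icc (k + 1) n,
              (τ i / τ (i - 1)) / (1 + 2 * (τ i / τ (i - 1))) ∧
        0 < doc τ n (n - k) := by
  intro n k hk hkn hn
  have h1 := doc_formula N τ hτ (n - k) k n (by omega) hk hn
  have hfac : ∀ i ∈ Finset.Icc (k + 1) n,
      (τ i / τ (i - 1)) ^ 2 / (1 + 2 * (τ i / τ (i - 1))) =
      (τ i / τ (i - 1)) * ((τ i / τ (i - 1)) / (1 + 2 * (τ i / τ (i - 1)))) := by
    intro i _; rw [sq, mul_div_assoc]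
  refine ⟨h1, ?_, ?_⟩
  · rw [h1, Finset.prod_congr rfl hfac, Finset.prod_mul_distrib,
      prod_ratio N τ hτ k hk n hkn hn]
    ring
  · rw [h1]
    have hb := bdf2_pos N τ hτ k hk (by omega)
    apply mul_pos (one_div_pos.mpr hb)
    apply Finset.prod_pos
    intro i hi
    simp only [Finset.mem_Icc] at hi
    have hτi : 0 < τ i := hτ i (by omega) (by omega)
    have hτi1 : 0 < τ (i - 1) := hτ (i - 1) (by omega) (by omega)
    have hr : 0 < τ i / τ (i - 1) := div_pos hτi hτi1
    positivity
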